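/- Let p be a real number with 0 < p ≤ 1/2, set ℓ = ⌊1/p⌋, and let Y be a binomial random variable with parameters ℓ and p (i.e., the number of successes in ℓ independent Bernoulli(p) trials). Then for every integer δ ≥ 1, P(Y ≥ δ) = Σ_{i=δ}^{ℓ} C(ℓ,i) p^i (1−p)^{ℓ−i} ≤ exp( −(1/2)(δ ln δ − δ + 1) ). -/

import Mathlib

private lemma fact_lower (n : ℕ) (hn : 1 ≤ n) :
    Real.exp ((n : ℝ) * Real.log n - n + 1) ≤ (n.factorial : ℝ) := by
  induction n, hn using Nat.le_induction with
  | base => simp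
  | succ n hn ih =>
    have hn0 : (0 : ℝ) < n := by exact_mod_cast hn
    have hn1 : (0 : ℝ) < (n : ℝ) + 1 := by linarith
    have hlog : Real.log ((n + 1 : ℝ) / n) ≤ 1 / n := by
      have := Real.log_le_sub_one_of_pos (show (0:ℝ) < (n+1:ℝ)/n by positivity)
      have h2 : ((n:ℝ)+1)/n - 1 = 1 / n := by field_simp; ring
      linarith [h2 ▸ this]
    have hlog' : (n : ℝ) * (Real.log ((n:ℝ)+1) - Real.log n) ≤ 1 := by
      rw [← Real.log_div (by positivity) (by positivity)] 
      calc (n:ℝ) * Real.log ((n + 1 : ℝ)/n) ≤ (n:ℝ) * (1/n) :=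
            mul_le_mul_of_nonneg_left hlog hn0.le
        _ = 1 := by field_simp
    have key : Real.exp (((n:ℝ)+1) * Real.log ((n:ℝ)+1) - ((n:ℝ)+1) + 1)
        ≤ ((n:ℝ)+1) * Real.exp ((n : ℝ) * Real.log n - n + 1) := by
      have h4 : ((n:ℝ)+1) * Real.log ((n:ℝ)+1) - ((n:ℝ)+1) + 1
          ≤ Real.log ((n:ℝ)+1) + ((n : ℝ) * Real.log n - n + 1) := by nlinarith [hlog']
      calc Real.exp (((n:ℝ)+1) * Real.log ((n:ℝ)+1) - ((n:ℝ)+1) + 1)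
          ≤ Real.exp (Real.log ((n:ℝ)+1) + ((n : ℝ) * Real.log n - n + 1)) :=
            Real.exp_le_exp.2 h4
        _ = ((n:ℝ)+1) * Real.exp ((n : ℝ) * Real.log n - n + 1) := by
            rw [Real.exp_add, Real.exp_log hn1]
    calc Real.exp ((↑(n+1) : ℝ) * Real.log (↑(n+1)) - (↑(n+1):ℝ) + 1)
        = Real.exp (((n:ℝ)+1) * Real.log ((n:ℝ)+1) - ((n:ℝ)+1) + 1) := by push_cast; ring_nf
      _ ≤ ((n:ℝ)+1) * Real.exp ((n : ℝ) * Real.log n - n + 1) := key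
      _ ≤ ((n:ℝ)+1) * (n.factorial : ℝ) := by
            apply mul_le_mul_of_nonneg_left ih (by positivity)
      _ = ((n+1).factorial : ℝ) := by rw [Nat.factorial_succ]; push_cast; ring

/-- For 0 < p <= 1/2 and l = floor(1/p), a Binomial(l,p) random
variable Y satisfies, for every integer delta >= 1,
P(Y >= delta) = sum_{i=delta}^{l} C(l,i) p^i (1-p)^(l-i)
             <= exp(-(1/2)(delta ln delta - delta + 1)). -/
theorem binomial_tail_bound
    (p : ℝ) (hp0 : 0 < p) (hp : p ≤ 1 / 2)
    (ℓ : ℕ) (hℓ : ℓ = ⌊1 / p⌋₊) (δ : ℕ) (hδ : 1 ≤ δ) :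
    ∑ i ∈ Finset.Icc δ ℓ, (ℓ.choose i : ℝ) * p ^ i * (1 - p) ^ (ℓ - i)
      ≤ Real.exp (-(1 / 2) * ((δ : ℝ) * Real.log δ - (δ : ℝ) + 1)) := by
  have h1p : (0:ℝ) ≤ 1 - p := by linarith
  have hδ0 : (0:ℝ) < δ := by exact_mod_cast hδ
  -- A = δ log δ - δ + 1 ≥ 0
  have hA : 0 ≤ (δ:ℝ) * Real.log δ - δ + 1 := by
    have h := Real.log_le_sub_one_of_pos (show (0:ℝ) < 1/δ by positivity)
    rw [Real.log_div one_ne_zero (ne_of_gt hδ0), Real.log_one] at h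
    have h2 := mul_le_mul_of_nonneg_left h hδ0.le
    have h3 : (δ:ℝ) * (1/(δ:ℝ)) = 1 := by field_simp
    nlinarith
  -- step 1: sum ≤ C(ℓ,δ) p^δ
  have hsum : ∑ i ∈ Finset.Icc δ ℓ, (ℓ.choose i : ℝ) * p ^ i * (1 - p) ^ (ℓ - i)
      ≤ (ℓ.choose δ : ℝ) * p ^ δ := by
    rcases le_or_gt δ ℓ with hle | hlt
    · have hIcc : Finset.Icc δ ℓ = Finset.Ico δ (ℓ + 1) := by
        rw [Finset.Ico_add_one_right_eq_Icc]
      rw [hIcc, Finset.sum_Ico_eq_sum_range]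
      have hbin : ∑ j ∈ Finset.range (ℓ + 1 - δ),
          (ℓ.choose δ : ℝ) * p ^ δ * (p ^ j * (1 - p) ^ (ℓ - δ - j) * ((ℓ - δ).choose j : ℝ))
          = (ℓ.choose δ : ℝ) * p ^ δ := by
        rw [← Finset.mul_sum]
        have h1 : ℓ + 1 - δ = (ℓ - δ) + 1 := by omega
        rw [h1, ← add_pow p (1 - p) (ℓ - δ)]
        simp
      rw [← hbin]
      apply Finset.sum_le_sum
      intro j hj
      have hj' : j ≤ ℓ - δ := by
        have := Finset.mem_range.1 hj; omega
      have hnat : ℓ.choose (δ + j) ≤ ℓ.choose δ * (ℓ - δ).choose j := by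
        have hid := Nat.choose_mul (n := ℓ) (show δ ≤ δ + j by omega)
        have h2 : (δ + j) - δ = j := by omega
        rw [h2] at hid
        calc ℓ.choose (δ + j) ≤ ℓ.choose (δ + j) * (δ + j).choose δ :=
              Nat.le_mul_of_pos_right _ (Nat.choose_pos (by omega))
          _ = ℓ.choose δ * (ℓ - δ).choose j := hid
      have hsub : ℓ - (δ + j) = ℓ - δ - j := by omega
      rw [hsub]
      have hcast : (ℓ.choose (δ + j) : ℝ) ≤ (ℓ.choose δ : ℝ) * ((ℓ - δ).choose j : ℝ) := by
        exact_mod_cast hnat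
      have hpow : p ^ (δ + j) = p ^ δ * p ^ j := pow_add p δ j
      calc (ℓ.choose (δ + j) : ℝ) * p ^ (δ + j) * (1 - p) ^ (ℓ - δ - j)
          ≤ ((ℓ.choose δ : ℝ) * ((ℓ - δ).choose j : ℝ)) * p ^ (δ + j) * (1 - p) ^ (ℓ - δ - j) := by
            apply mul_le_mul_of_nonneg_right (mul_le_mul_of_nonneg_right hcast (by positivity))
              (by positivity)
        _ = (ℓ.choose δ : ℝ) * p ^ δ * (p ^ j * (1 - p) ^ (ℓ - δ - j) * ((ℓ - δ).choose j : ℝ)) := by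
            rw [hpow]; ring
    · rw [Finset.Icc_eq_empty_of_lt hlt, Finset.sum_empty]
      positivity
  -- step 2: C(ℓ,δ) p^δ ≤ 1 / δ!
  have hstep2 : (ℓ.choose δ : ℝ) * p ^ δ ≤ 1 / (δ.factorial : ℝ) := by
    have hc : (ℓ.choose δ : ℝ) ≤ (ℓ : ℝ) ^ δ / (δ.factorial : ℝ) := by
      have := Nat.choose_le_pow_div (α := ℝ) δ ℓ
      simpa using this
    have hlp : (ℓ : ℝ) * p ≤ 1 := by
      have hfl : (⌊1 / p⌋₊ : ℝ) ≤ 1 / p := Nat.floor_le (by positivity)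
      rw [hℓ]
      calc (⌊1 / p⌋₊ : ℝ) * p ≤ (1 / p) * p := mul_le_mul_of_nonneg_right hfl hp0.le
        _ = 1 := by field_simp
    have hlp' : ((ℓ:ℝ) * p) ^ δ ≤ 1 := by
      apply pow_le_one₀ (by positivity) hlp
    calc (ℓ.choose δ : ℝ) * p ^ δ ≤ ((ℓ : ℝ) ^ δ / (δ.factorial : ℝ)) * p ^ δ :=
          mul_le_mul_of_nonneg_right hc (by positivity)
      _ = ((ℓ:ℝ) * p) ^ δ / (δ.factorial : ℝ) := by rw [mul_pow]; ring
      _ ≤ 1 / (δ.factorial : ℝ) := by gcongr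
  -- step 3: 1 / δ! ≤ exp(-(1/2) A)
  have hstep3 : 1 / (δ.factorial : ℝ) ≤ Real.exp (-(1 / 2) * ((δ : ℝ) * Real.log δ - δ + 1)) := by
    have hf := fact_lower δ hδ
    have hfp : (0:ℝ) < (δ.factorial : ℝ) := by positivity
    have h1 : 1 / (δ.factorial : ℝ) ≤ Real.exp (-((δ : ℝ) * Real.log δ - δ + 1)) := by
      rw [Real.exp_neg, ← one_div]
      exact one_div_le_one_div_of_le (Real.exp_pos _) hf
    calc 1 / (δ.factorial : ℝ) ≤ Real.exp (-((δ : ℝ) * Real.log δ - δ + 1)) := h1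
      _ ≤ Real.exp (-(1 / 2) * ((δ : ℝ) * Real.log δ - δ + 1)) := by
          apply Real.exp_le_exp.2; linarith
  linarith
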